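/- In any generalized tournament graph with n vertices and m directed edges, the number of triads not covered by any directed edge is at least F(n,m) := (1/6)(-2n·floor(2m/n)^2 + (8m - 2n)·floor(2m/n) + (n-2)((n-1)n - 6m)). -/

import Mathlib

open Finset

section AuxGT

variable {V : Type*}

private lemma arc_ext (d : V → V → Prop) (hasym : ∀ x y : V, d x y → ¬ d y x)
    {e f : V × V} (he : d e.1 e.2) (hf : d f.1 f.2)
    (h1 : e.1 = f.1 ∨ e.1 = f.2) (h2 : e.2 = f.1 ∨ e.2 = f.2) : e = f := by
  have hne : e.1 ≠ e.2 := by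
    intro h
    exact hasym _ _ he (by rw [← h] at he ⊢; exact he)
  rcases h1 with h1 | h1 <;> rcases h2 with h2 | h2
  · exact absurd (h1.trans h2.symm) hne
  · exact Prod.ext h1 h2
  · exact absurd he (by rw [h1, h2]; exact hasym _ _ hf)
  · exact absurd (h1.trans h2.symm) hne

private lemma count_triads_pair [Fintype V] [DecidableEq V] {a b : V} (hab : a ≠ b) :
    (((univ : Finset V).powersetCard 3).filter fun t => a ∈ t ∧ b ∈ t).card
      = Fintype.card V - 2 := by
  have himg : (((univ : Finset V).powersetCard 3).filter fun t => a ∈ t ∧ b ∈ t)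
      = ((univ.erase a).erase b).image (fun w => insert a (insert b {w})) := by
    ext t
    simp only [mem_filter, mem_image, mem_erase, mem_univ, and_true,
      Finset.mem_powersetCard_univ]
    constructor
    · rintro ⟨h3, ha, hb⟩
      have hb' : b ∈ t.erase a := mem_erase.mpr ⟨hab.symm, hb⟩
      have hc1 : ((t.erase a).erase b).card = 1 := by
        rw [card_erase_of_mem hb', card_erase_of_mem ha, h3]
      obtain ⟨w, hw⟩ := Finset.card_eq_one.mp hc1
      have hwmem : w ∈ (t.erase a).erase b := by rw [hw]; exact mem_singleton_self w
      have hwb : w ≠ b := (mem_erase.mp hwmem).1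
      have hwa : w ≠ a := (mem_erase.mp (mem_of_mem_erase hwmem)).1
      refine ⟨w, ⟨hwb, hwa⟩, ?_⟩
      rw [← hw, insert_erase hb', insert_erase ha]
    · rintro ⟨w, ⟨hwb, hwa⟩, rfl⟩
      refine ⟨?_, mem_insert_self _ _, mem_insert_of_mem (mem_insert_self _ _)⟩
      rw [card_insert_of_notMem (by simp [hab, hwa.symm]),
        card_insert_of_notMem (by simp [hwb.symm]), card_singleton]
  rw [himg, card_image_of_injOn ?inj, card_erase_of_mem
      (mem_erase.mpr ⟨hab.symm, mem_univ b⟩), card_erase_of_mem (mem_univ a), card_univ,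
      Nat.sub_sub]
  case inj =>
    intro w hw w' hw' h
    have h2 : ({a, b, w} : Finset V) = {a, b, w'} := h
    have : w ∈ ({a, b, w'} : Finset V) :=
      h2 ▸ mem_insert_of_mem (mem_insert_of_mem (mem_singleton_self w))
    simp only [mem_insert, mem_singleton] at this
    rcases this with h' | h' | h'
    · exact absurd h' (mem_erase.mp (mem_of_mem_erase hw)).1
    · exact absurd h' (mem_erase.mp hw).1
    · exact h'

private lemma K_le_three [DecidableEq V] (d : V → V → Prop)
    (hasym : ∀ x y : V, d x y → ¬ d y x) {A : Finset (V × V)}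
    (hA : ∀ p ∈ A, d p.1 p.2) {t : Finset V} (ht : t.card = 3) :
    (A.filter fun p => p.1 ∈ t ∧ p.2 ∈ t).card ≤ 3 := by
  have h : (A.filter fun p => p.1 ∈ t ∧ p.2 ∈ t).card ≤ (t.powersetCard 2).card := by
    apply card_le_card_of_injOn (fun p => ({p.1, p.2} : Finset V))
    · intro p hp
      simp only [mem_coe, mem_filter] at hp ⊢
      have hd := hA p hp.1
      have hne : p.1 ≠ p.2 := fun h => hasym _ _ hd (h ▸ hd)
      rw [mem_powersetCard]
      refine ⟨?_, card_pair hne⟩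
      intro x hx
      simp only [mem_insert, mem_singleton] at hx
      rcases hx with rfl | rfl
      exacts [hp.2.1, hp.2.2]
    · intro e he f hf h
      simp only [mem_coe, mem_filter] at he hf
      have h2 : ({e.1, e.2} : Finset V) = {f.1, f.2} := h
      have m1 : e.1 ∈ ({f.1, f.2} : Finset V) := h2 ▸ mem_insert_self _ _
      have m2 : e.2 ∈ ({f.1, f.2} : Finset V) :=
        h2 ▸ mem_insert_of_mem (mem_singleton_self _)
      simp only [mem_insert, mem_singleton] at m1 m2
      exact arc_ext d hasym (hA e he.1) (hA f hf.1) m1 m2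
  rw [card_powersetCard, ht] at h
  simpa using h

private lemma sum_K_eq [Fintype V] [DecidableEq V] {A : Finset (V × V)}
    (hA : ∀ p ∈ A, p.1 ≠ p.2) :
    ∑ t ∈ (univ : Finset V).powersetCard 3,
        (A.filter fun p => p.1 ∈ t ∧ p.2 ∈ t).card
      = A.card * (Fintype.card V - 2) := by
  rw [sum_congr rfl fun t _ => card_filter _ _, Finset.sum_comm]
  rw [sum_congr rfl (fun p hp => ?_), sum_const, smul_eq_mul]
  rw [← card_filter]
  exact count_triads_pair (hA p hp)

private lemma sum_deg_eq [Fintype V] [DecidableEq V] {A : Finset (V × V)}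
    (hA : ∀ p ∈ A, p.1 ≠ p.2) :
    ∑ v : V, (A.filter fun p => v = p.1 ∨ v = p.2).card = 2 * A.card := by
  rw [sum_congr rfl fun v _ => card_filter _ _, Finset.sum_comm]
  rw [sum_congr rfl (fun p hp => ?_), sum_const, smul_eq_mul, mul_comm]
  rw [← card_filter]
  have : (univ.filter fun v => v = p.1 ∨ v = p.2) = ({p.1, p.2} : Finset V) := by
    ext v; simp [mem_insert, mem_singleton]
  rw [this, card_pair (hA p hp)]

private lemma common_unique (d : V → V → Prop) (hasym : ∀ x y : V, d x y → ¬ d y x)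
    {e f : V × V} (he : d e.1 e.2) (hf : d f.1 f.2) (hef : e ≠ f) {v v' : V}
    (hv1 : v = e.1 ∨ v = e.2) (hv2 : v = f.1 ∨ v = f.2)
    (hv1' : v' = e.1 ∨ v' = e.2) (hv2' : v' = f.1 ∨ v' = f.2) : v = v' := by
  by_contra hne
  apply hef
  apply arc_ext d hasym he hf
  · rcases hv1 with h | h
    · rcases hv2 with g | g
      · exact Or.inl (h.symm.trans g)
      · exact Or.inr (h.symm.trans g)
    · rcases hv1' with h' | h'
      · rcases hv2' with g' | g'
        · exact Or.inl (h'.symm.trans g')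
        · exact Or.inr (h'.symm.trans g')
      · exact absurd (h.trans h'.symm) hne
  · rcases hv1 with h | h
    · rcases hv1' with h' | h'
      · exact absurd (h.trans h'.symm) hne
      · rcases hv2' with g' | g'
        · exact Or.inl (h'.symm.trans g')
        · exact Or.inr (h'.symm.trans g')
    · rcases hv2 with g | g
      · exact Or.inl (h.symm.trans g)
      · exact Or.inr (h.symm.trans g)

private lemma tri_card [DecidableEq V] (d : V → V → Prop)
    (hasym : ∀ x y : V, d x y → ¬ d y x)
    {e f : V × V} (he : d e.1 e.2) (hf : d f.1 f.2) (hef : e ≠ f) {v : V}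
    (hv1 : v = e.1 ∨ v = e.2) (hv2 : v = f.1 ∨ v = f.2) :
    (insert e.1 (insert e.2 ({f.1, f.2} : Finset V))).card = 3 := by
  have hne : e.1 ≠ e.2 := fun h => hasym _ _ he (h ▸ he)
  have hnf : f.1 ≠ f.2 := fun h => hasym _ _ hf (h ▸ hf)
  apply Finset.card_eq_three.mpr
  rcases hv1 with h1 | h1 <;> rcases hv2 with h2 | h2
  · have hff : f.1 = e.1 := h2.symm.trans h1
    refine ⟨e.1, e.2, f.2, hne, ?_, ?_, ?_⟩
    · exact fun h => hnf (hff.trans h)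
    · intro h
      exact hef (arc_ext d hasym he hf (Or.inl hff.symm) (Or.inr h))
    · ext x
      simp only [mem_insert, mem_singleton, hff]
      tauto
  · have hff : f.2 = e.1 := h2.symm.trans h1
    refine ⟨e.1, e.2, f.1, hne, ?_, ?_, ?_⟩
    · exact fun h => hnf (h.symm.trans hff.symm)
    · intro h
      exact hef (arc_ext d hasym he hf (Or.inr hff.symm) (Or.inl h))
    · ext x
      simp only [mem_insert, mem_singleton, hff]
      tauto
  · have hff : f.1 = e.2 := h2.symm.trans h1
    refine ⟨e.1, e.2, f.2, hne, ?_, ?_, ?_⟩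
    · intro h
      exact hef (arc_ext d hasym he hf (Or.inr h) (Or.inl hff.symm))
    · exact fun h => hnf (hff.trans h)
    · ext x
      simp only [mem_insert, mem_singleton, hff]
      tauto
  · have hff : f.2 = e.2 := h2.symm.trans h1
    refine ⟨e.1, e.2, f.1, hne, ?_, ?_, ?_⟩
    · intro h
      exact hef (arc_ext d hasym he hf (Or.inl h) (Or.inr hff.symm))
    · exact fun h => hnf (h.symm.trans hff.symm)
    · ext x
      simp only [mem_insert, mem_singleton, hff]
      tauto

private lemma sum_sq_le [Fintype V] [DecidableEq V] (d : V → V → Prop)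
    (hasym : ∀ x y : V, d x y → ¬ d y x) {A : Finset (V × V)}
    (hA : ∀ p ∈ A, d p.1 p.2) :
    ∑ v : V, ((A.filter fun p => v = p.1 ∨ v = p.2).card *
        (A.filter fun p => v = p.1 ∨ v = p.2).card -
        (A.filter fun p => v = p.1 ∨ v = p.2).card)
      ≤ ∑ t ∈ (univ : Finset V).powersetCard 3,
          ((A.filter fun p => p.1 ∈ t ∧ p.2 ∈ t).card *
            (A.filter fun p => p.1 ∈ t ∧ p.2 ∈ t).card -
            (A.filter fun p => p.1 ∈ t ∧ p.2 ∈ t).card) := by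
  have hL : ∑ v : V, ((A.filter fun p => v = p.1 ∨ v = p.2).card *
      (A.filter fun p => v = p.1 ∨ v = p.2).card -
      (A.filter fun p => v = p.1 ∨ v = p.2).card)
      = ((univ : Finset V).sigma fun v =>
          (A.filter fun p => v = p.1 ∨ v = p.2).offDiag).card := by
    rw [card_sigma]
    exact (sum_congr rfl fun v _ => offDiag_card _).symm
  have hR : ∑ t ∈ (univ : Finset V).powersetCard 3,
      ((A.filter fun p => p.1 ∈ t ∧ p.2 ∈ t).card *
        (A.filter fun p => p.1 ∈ t ∧ p.2 ∈ t).card -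
        (A.filter fun p => p.1 ∈ t ∧ p.2 ∈ t).card)
      = (((univ : Finset V).powersetCard 3).sigma fun t =>
          (A.filter fun p => p.1 ∈ t ∧ p.2 ∈ t).offDiag).card := by
    rw [card_sigma]
    exact (sum_congr rfl fun t _ => offDiag_card _).symm
  rw [hL, hR]
  apply card_le_card_of_injOn
    (fun x => ⟨insert x.2.1.1 (insert x.2.1.2 {x.2.2.1, x.2.2.2}), x.2⟩)
  · rintro ⟨v, e, f⟩ hx
    simp only [mem_coe, mem_sigma, mem_offDiag, mem_filter, mem_univ, true_and] at hx
    obtain ⟨⟨heA, hv1⟩, ⟨hfA, hv2⟩, hef⟩ := hx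
    simp only [mem_coe, mem_sigma, mem_offDiag, mem_filter, Finset.mem_powersetCard_univ]
    refine ⟨tri_card d hasym (hA e heA) (hA f hfA) hef hv1 hv2,
      ⟨heA, ?_, ?_⟩, ⟨hfA, ?_, ?_⟩, hef⟩
    · exact mem_insert_self _ _
    · exact mem_insert_of_mem (mem_insert_self _ _)
    · exact mem_insert_of_mem (mem_insert_of_mem (mem_insert_self _ _))
    · exact mem_insert_of_mem (mem_insert_of_mem
        (mem_insert_of_mem (mem_singleton_self _)))
  · rintro ⟨v, e, f⟩ hx ⟨v', e', f'⟩ hy h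
    simp only [mem_coe, mem_sigma, mem_offDiag, mem_filter, mem_univ, true_and] at hx hy
    obtain ⟨⟨heA, hv1⟩, ⟨hfA, hv2⟩, hef⟩ := hx
    obtain ⟨⟨heA', hv1'⟩, ⟨hfA', hv2'⟩, -⟩ := hy
    simp only [Sigma.mk.inj_iff, heq_eq_eq, Prod.mk.injEq] at h
    obtain ⟨-, hee, hff⟩ := h
    subst hee; subst hff
    have := common_unique d hasym (hA e heA) (hA f hfA) hef hv1 hv2 hv1' hv2'
    simp [this]

private lemma two_choose_two (n : ℕ) : 2 * (n.choose 2 : ℤ) = n * (n - 1) := by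
  induction n with
  | zero => simp
  | succ k ih =>
    rw [Nat.choose_succ_succ, Nat.choose_one_right]
    push_cast
    push_cast at ih
    linear_combination ih

private lemma six_choose_three (n : ℕ) : 6 * (n.choose 3 : ℤ) = n * (n - 1) * (n - 2) := by
  induction n with
  | zero => simp
  | succ k ih =>
    rw [Nat.choose_succ_succ]
    push_cast
    push_cast at ih
    linear_combination ih + 3 * two_choose_two k

end AuxGT

/-- Number of directed edges covering a triad `t`. -/
noncomputable def covCount {V : Type*} (d : V → V → Prop) (t : Finset V) : ℕ :=
  {p : V × V | p.1 ∈ t ∧ p.2 ∈ t ∧ d p.1 p.2}.ncard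

theorem uncovered_triads_lower_bound {V : Type*} [Fintype V] (d : V → V → Prop)
    (hirr : ∀ v : V, ¬ d v v)
    (hasym : ∀ x y : V, d x y → ¬ d y x)
    (n m : ℕ) (hn : Fintype.card V = n)
    (hm : {p : V × V | d p.1 p.2}.ncard = m) :
    (-2 * (n : ℤ) * ((2 * m / n : ℕ) : ℤ) ^ 2 +
        (8 * (m : ℤ) - 2 * (n : ℤ)) * ((2 * m / n : ℕ) : ℤ) +
        ((n : ℤ) - 2) * (((n : ℤ) - 1) * (n : ℤ) - 6 * (m : ℤ)))
      ≤ 6 * ({t : Finset V | t.card = 3 ∧ covCount d t = 0}.ncard : ℤ) := by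
  classical
  set A : Finset (V × V) := univ.filter (fun p => d p.1 p.2) with hA_def
  have hAmem : ∀ p ∈ A, d p.1 p.2 := fun p hp => (mem_filter.mp hp).2
  have hAne : ∀ p ∈ A, p.1 ≠ p.2 := fun p hp h =>
    hasym _ _ (hAmem p hp) (h ▸ hAmem p hp)
  have hmA : A.card = m := by
    rw [← hm, show {p : V × V | d p.1 p.2} = ↑A by ext p; simp [hA_def],
      Set.ncard_coe_finset]
  set K : Finset V → ℕ := fun t => (A.filter fun p => p.1 ∈ t ∧ p.2 ∈ t).card
    with hK_def
  set D : V → ℕ := fun v => (A.filter fun p => v = p.1 ∨ v = p.2).card with hD_def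
  have hcov : ∀ t : Finset V, covCount d t = K t := by
    intro t
    rw [covCount, show {p : V × V | p.1 ∈ t ∧ p.2 ∈ t ∧ d p.1 p.2}
        = ↑(A.filter fun p => p.1 ∈ t ∧ p.2 ∈ t) by
      ext p; simp only [Set.mem_setOf_eq, coe_filter, mem_filter, mem_univ, true_and,
        hA_def, Set.mem_setOf_eq]; tauto,
      Set.ncard_coe_finset]
  set T : Finset (Finset V) := (univ : Finset V).powersetCard 3 with hT_def
  set U : ℕ := (T.filter fun t => K t = 0).card with hU_def
  clear_value U
  have hUeq : {t : Finset V | t.card = 3 ∧ covCount d t = 0}.ncard = U := by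
    rw [show {t : Finset V | t.card = 3 ∧ covCount d t = 0}
        = ↑(T.filter fun t => K t = 0) by
      ext t
      simp [hT_def, Finset.mem_powersetCard_univ, hcov],
      Set.ncard_coe_finset]
    exact hU_def.symm
  rw [hUeq]
  by_cases hn2 : n < 2
  · have hm0 : m = 0 := by
      rw [← hmA]
      have hAe : A = ∅ := by
        rw [Finset.eq_empty_iff_forall_notMem]
        intro p hp
        have hcard : Fintype.card V ≤ 1 := by omega
        exact hAne p hp (Fintype.card_le_one_iff.mp hcard p.1 p.2)
      simp [hAe]
    subst hm0
    interval_cases n <;> norm_num <;> positivity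
  push_neg at hn2
  have hsumK : ∑ t ∈ T, K t = m * (n - 2) := by
    simp only [hK_def, hT_def]
    rw [sum_K_eq hAne, hmA, hn]
  have hsumD : ∑ v : V, D v = 2 * m := by
    simp only [hD_def]
    rw [sum_deg_eq hAne, hmA]
  have hKle : ∀ t ∈ T, K t ≤ 3 := by
    intro t ht
    exact K_le_three d hasym hAmem (Finset.mem_powersetCard_univ.mp ht)
  have hsq : ∑ v : V, (D v * D v - D v) ≤ ∑ t ∈ T, (K t * K t - K t) := by
    simp only [hK_def, hD_def, hT_def]
    exact sum_sq_le d hasym hAmem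
  set Q : ℤ := ((2 * m / n : ℕ) : ℤ) with hQ_def
  clear_value Q
  -- cast lemmas
  have e1 : ∀ k : ℕ, ((k * k - k : ℕ) : ℤ) = (k : ℤ) * k - k := by
    intro k
    have hk : k ≤ k * k := by nlinarith
    push_cast [Nat.cast_sub hk]
    ring
  have hcastK : ∑ t ∈ T, (K t : ℤ) = (m : ℤ) * ((n : ℤ) - 2) := by
    rw [← Nat.cast_sum, hsumK, Nat.cast_mul, Nat.cast_sub hn2]
    norm_num
  have hcastD : ∑ v : V, (D v : ℤ) = 2 * (m : ℤ) := by
    rw [← Nat.cast_sum, hsumD]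
    push_cast
    ring
  have hcastsq : ∑ v : V, ((D v : ℤ) * D v - D v)
      ≤ ∑ t ∈ T, ((K t : ℤ) * K t - K t) := by
    calc ∑ v : V, ((D v : ℤ) * D v - D v)
        = ((∑ v : V, (D v * D v - D v) : ℕ) : ℤ) := by
          rw [Nat.cast_sum]
          exact sum_congr rfl fun v _ => (e1 _).symm
      _ ≤ ((∑ t ∈ T, (K t * K t - K t) : ℕ) : ℤ) := by exact_mod_cast hsq
      _ = ∑ t ∈ T, ((K t : ℤ) * K t - K t) := by
          rw [Nat.cast_sum]
          exact sum_congr rfl fun t _ => e1 _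
  have hpt : ∀ t ∈ T, (3 : ℤ) - 3 * (K t : ℤ) + ((K t : ℤ) * K t - K t)
      ≤ (if K t = 0 then (3 : ℤ) else 0) := by
    intro t ht
    have h3 := hKle t ht
    revert h3
    generalize K t = k
    intro h3
    interval_cases k <;> norm_num
  have hsum1 : 3 * (T.card : ℤ) - 3 * ((m : ℤ) * ((n : ℤ) - 2))
      + ∑ t ∈ T, ((K t : ℤ) * K t - K t) ≤ 3 * (U : ℤ) := by
    have h := Finset.sum_le_sum hpt
    rw [Finset.sum_add_distrib, Finset.sum_sub_distrib, sum_const, ← Finset.mul_sum,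
      hcastK] at h
    have h2 : ∑ t ∈ T, (if K t = 0 then (3 : ℤ) else 0) = 3 * (U : ℤ) := by
      rw [← Finset.sum_filter, sum_const, hU_def]
      push_cast
      ring
    rw [h2, nsmul_eq_mul] at h
    linarith
  have hconv : ∀ v : V, (Q * Q - Q) + 2 * Q * ((D v : ℤ) - Q)
      ≤ (D v : ℤ) * D v - D v := by
    intro v
    rcases le_or_gt ((D v : ℤ) - Q) 0 with h | h
    · have h2 : (D v : ℤ) - Q - 1 ≤ 0 := by linarith
      linarith [mul_nonneg (neg_nonneg.mpr h) (neg_nonneg.mpr h2)]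
    · have h1 : (1 : ℤ) ≤ (D v : ℤ) - Q := by
        have := Int.add_one_le_of_lt h
        linarith
      linarith [mul_nonneg (by linarith : (0:ℤ) ≤ (D v : ℤ) - Q)
        (by linarith : (0:ℤ) ≤ (D v : ℤ) - Q - 1)]
  have hsumconv : (n : ℤ) * (Q * Q - Q) + 2 * Q * (2 * (m : ℤ) - (n : ℤ) * Q)
      ≤ ∑ v : V, ((D v : ℤ) * D v - D v) := by
    have h := Finset.sum_le_sum fun v (_ : v ∈ (univ : Finset V)) => hconv v
    have hL : ∑ v : V, ((Q * Q - Q) + 2 * Q * ((D v : ℤ) - Q))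
        = (n : ℤ) * (Q * Q - Q) + 2 * Q * (2 * (m : ℤ) - (n : ℤ) * Q) := by
      rw [Finset.sum_add_distrib, Finset.sum_const, card_univ, hn, nsmul_eq_mul]
      rw [show ∑ v : V, 2 * Q * ((D v : ℤ) - Q) = 2 * Q * ∑ v : V, ((D v : ℤ) - Q)
        from (Finset.mul_sum _ _ _).symm]
      rw [Finset.sum_sub_distrib, hcastD, Finset.sum_const, card_univ, hn,
        nsmul_eq_mul]
      try ring
    rw [hL] at h
    exact h
  have hTcard : (T.card : ℤ) = (n.choose 3 : ℤ) := by
    rw [hT_def, card_powersetCard, card_univ, hn]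
  have h6 : 6 * (T.card : ℤ) = (n : ℤ) * ((n : ℤ) - 1) * ((n : ℤ) - 2) := by
    rw [hTcard, six_choose_three]
  have hmid : 3 * (T.card : ℤ) - 3 * ((m : ℤ) * ((n : ℤ) - 2))
      + ((n : ℤ) * (Q * Q - Q) + 2 * Q * (2 * (m : ℤ) - (n : ℤ) * Q))
      ≤ 3 * (U : ℤ) := by
    have h := le_trans hsumconv hcastsq
    linarith [hsum1, h]
  linarith [hmid, h6]
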